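/- For every A ∈ Mat_{n×n}(ℝ), every x ∈ ℝ^n, and every pair of indices (i,j) with i in group α and j in group β, the (i,j) entry of π_A(x) = −T_x D_x A D_x T_x^t equals x_i x_j ( −a_{ij} + (A^{α,β} x^β)_i + ((A^{α,β})^t x^α)_j − (x^α)^t A^{α,β} x^β ). -/
import Mathlib

open Matrix

/-- Index set of a polymatrix game with signature `n : Fin p → ℕ`:
`i = ⟨α, k⟩` is the `k`-th strategy of group `α`. -/
abbrev Idx (p : ℕ) (n : Fin p → ℕ) : Type := (α : Fin p) × Fin (n α)

noncomputable section

/-- The polymatrix replicator vector field `X_{(n̲,A)}`; note that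
`Σ_β (x^α)ᵗ A^{α,β} x^β = Σ_{k ∈ α} x_k (Ax)_k`. -/
def replicator {p : ℕ} {n : Fin p → ℕ} (A : Matrix (Idx p n) (Idx p n) ℝ)
    (x : Idx p n → ℝ) (i : Idx p n) : ℝ :=
  x i * (A.mulVec x i - ∑ k : Fin (n i.1), x ⟨i.1, k⟩ * A.mulVec x ⟨i.1, k⟩)

/-- The polytope `Γ_n̲` (product of simplexes). -/
def Gamma (p : ℕ) (n : Fin p → ℕ) : Set (Idx p n → ℝ) :=
  {x | (∀ i, 0 ≤ x i) ∧ ∀ α : Fin p, ∑ k : Fin (n α), x ⟨α, k⟩ = 1}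

/-- The relative interior `Γ°_n̲`. -/
def GammaInt (p : ℕ) (n : Fin p → ℕ) : Set (Idx p n → ℝ) :=
  {x | (∀ i, 0 < x i) ∧ ∀ α : Fin p, ∑ k : Fin (n α), x ⟨α, k⟩ = 1}

/-- The block diagonal matrix `T_x = diag(T^1_x,…,T^p_x)`, `T^α_x = x^α 𝟙ᵗ - I`. -/
def Tmat {p : ℕ} {n : Fin p → ℕ} (x : Idx p n → ℝ) : Matrix (Idx p n) (Idx p n) ℝ :=
  fun i j => (if i.1 = j.1 then x i else 0) - (if i = j then 1 else 0)

/-- The bivector `π_A(x) = - T_x D_x A D_x T_xᵀ`. -/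
def piA {p : ℕ} {n : Fin p → ℕ} (A : Matrix (Idx p n) (Idx p n) ℝ) (x : Idx p n → ℝ) :
    Matrix (Idx p n) (Idx p n) ℝ :=
  -(Tmat x * Matrix.diagonal x * A * Matrix.diagonal x * (Tmat x)ᵀ)

/-- A formal equilibrium of the polymatrix game `(n̲, A)`. -/
def FormalEq {p : ℕ} {n : Fin p → ℕ} (A : Matrix (Idx p n) (Idx p n) ℝ)
    (q : Idx p n → ℝ) : Prop :=
  (∀ (α : Fin p) (i j : Fin (n α)), A.mulVec q ⟨α, i⟩ = A.mulVec q ⟨α, j⟩) ∧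
  ∀ α : Fin p, ∑ j : Fin (n α), q ⟨α, j⟩ = 1

/-- Entrywise formula for `π_A(x) = -T_x D_x A D_x T_xᵀ`: for `i ∈ α`, `j ∈ β`,
`π_A(x)_{ij} = x_i x_j (-a_{ij} + (A^{α,β}x^β)_i + ((A^{α,β})ᵗx^α)_j - (x^α)ᵗA^{α,β}x^β)`. -/
lemma Tmat_sum {p : ℕ} {n : Fin p → ℕ} (x : Idx p n → ℝ) (i : Idx p n)
    (f : Idx p n → ℝ) :
    ∑ k : Idx p n, Tmat x i k * f k
      = x i * (∑ k : Fin (n i.1), f ⟨i.1, k⟩) - f i := by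
  rw [← Finset.univ_sigma_univ, Finset.sum_sigma]
  rw [Finset.sum_eq_single i.1]
  · simp only [Tmat]
    have : ∀ k : Fin (n i.1), (if i = ⟨i.1, k⟩ then (1:ℝ) else 0) = if i.2 = k then 1 else 0 := by
      intro k
      congr 1
      rw [eq_iff_iff]
      constructor
      · intro h; cases i; simp_all
      · intro h; cases i; simp_all
    simp only [if_pos rfl, sub_mul, Finset.sum_sub_distrib, this]
    rw [Finset.mul_sum]
    congr 1
    rw [Finset.sum_eq_single i.2]
    · simp
    · intro b _ hb; rw [if_neg (fun h => hb h.symm)]; ring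
    · simp
  · intro b _ hb
    apply Finset.sum_eq_zero
    intro k _
    simp only [Tmat]
    rw [if_neg (fun h => hb h.symm), if_neg (by rintro rfl; exact hb rfl)]
    simp
  · simp

theorem stmt4 {p : ℕ} {n : Fin p → ℕ} (hn : ∀ α, 0 < n α)
    (A : Matrix (Idx p n) (Idx p n) ℝ) (x : Idx p n → ℝ) (i j : Idx p n) :
    piA A x i j =
      x i * x j *
        (-(A i j) + (∑ l : Fin (n j.1), A i ⟨j.1, l⟩ * x ⟨j.1, l⟩)
          + (∑ k : Fin (n i.1), A ⟨i.1, k⟩ j * x ⟨i.1, k⟩)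
          - ∑ k : Fin (n i.1), ∑ l : Fin (n j.1),
              x ⟨i.1, k⟩ * A ⟨i.1, k⟩ ⟨j.1, l⟩ * x ⟨j.1, l⟩) := by
  have ha : ∀ l : Idx p n, (Tmat x * Matrix.diagonal x * A) i l
      = ∑ k : Idx p n, Tmat x i k * x k * A k l := by
    intro l
    rw [Matrix.mul_apply]
    exact Finset.sum_congr rfl fun k _ => by rw [Matrix.mul_diagonal]
  have h1 : piA A x i j =
      -∑ k : Idx p n, Tmat x i k * ∑ l : Idx p n, Tmat x j l * (x k * A k l * x l) := by
    have hb : piA A x i j = -∑ l : Idx p n,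
        (∑ k : Idx p n, Tmat x i k * x k * A k l) * x l * Tmat x j l := by
      simp only [piA, Matrix.neg_apply, neg_inj]
      rw [Matrix.mul_apply]
      exact Finset.sum_congr rfl fun l _ => by
        rw [Matrix.mul_diagonal, Matrix.transpose_apply, ha]
    rw [hb]
    congr 1
    simp only [Finset.sum_mul]
    rw [Finset.sum_comm]
    exact Finset.sum_congr rfl fun k _ => by
      rw [Finset.mul_sum]
      exact Finset.sum_congr rfl fun l _ => by ring
  rw [h1]
  have h2 : ∀ k : Idx p n, ∑ l : Idx p n, Tmat x j l * (x k * A k l * x l)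
      = x j * (∑ l : Fin (n j.1), x k * A k ⟨j.1, l⟩ * x ⟨j.1, l⟩) - x k * A k j * x j :=
    fun k => Tmat_sum x j _
  simp only [h2]
  rw [Tmat_sum x i
    (fun k => x j * (∑ l : Fin (n j.1), x k * A k ⟨j.1, l⟩ * x ⟨j.1, l⟩) - x k * A k j * x j)]
  have e1 : ∑ l : Fin (n j.1), x i * A i ⟨j.1, l⟩ * x ⟨j.1, l⟩
      = x i * ∑ l : Fin (n j.1), A i ⟨j.1, l⟩ * x ⟨j.1, l⟩ := by
    rw [Finset.mul_sum]; exact Finset.sum_congr rfl fun l _ => by ring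
  have e2 : ∑ k : Fin (n i.1),
        (x j * (∑ l : Fin (n j.1), x ⟨i.1, k⟩ * A ⟨i.1, k⟩ ⟨j.1, l⟩ * x ⟨j.1, l⟩)
          - x ⟨i.1, k⟩ * A ⟨i.1, k⟩ j * x j)
      = x j * (∑ k : Fin (n i.1), ∑ l : Fin (n j.1),
            x ⟨i.1, k⟩ * A ⟨i.1, k⟩ ⟨j.1, l⟩ * x ⟨j.1, l⟩)
        - x j * ∑ k : Fin (n i.1), A ⟨i.1, k⟩ j * x ⟨i.1, k⟩ := by
    rw [Finset.sum_sub_distrib, ← Finset.mul_sum]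
    congr 1
    rw [Finset.mul_sum]
    exact Finset.sum_congr rfl fun k _ => by ring
  rw [e2, e1]
  ring
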